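/- With S = {A^(1), …, A^(m)} as above (A^(i) = u^(2i−2) + u^(2i−1), u^(n) = y_{n+2^n−1} y_{n+2^{n+1}−1}), let W be the set of homogeneous degree-2 difference polynomials in [S], and for n ≥ 0 let W^[n] be the set of homogeneous degree-2 difference polynomials in S^[n], where S^[0] = S and S^[n] = ([S^[n−1]])' with A' = {f·σ(g) | fg ∈ A}. Then W^[n] = W for all n ≥ 1. -/

import Mathlib

open MvPolynomial

def sigmaSpan {R : Type*} [CommRing R] (σ : R →+* R) (S : Set R) : Ideal R :=
  Ideal.span {x | ∃ a ∈ S, ∃ k : ℕ, x = (⇑σ)^[k] a}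

def primeSet {R : Type*} [CommRing R] (σ : R →+* R) (A : Set R) : Set R :=
  {x | ∃ a b : R, a * b ∈ A ∧ x = a * σ b}

def shuffle {R : Type*} [CommRing R] (σ : R →+* R) (S : Set R) : ℕ → Set R
  | 0 => S
  | n + 1 => primeSet σ (sigmaSpan σ (shuffle σ S n) : Set R)

noncomputable def shift {K : Type*} [Field K] (σK : K →+* K) :
    MvPolynomial ℕ K →+* MvPolynomial ℕ K :=
  eval₂Hom (MvPolynomial.C.comp σK) (fun n => MvPolynomial.X (n + 1))

noncomputable def uPoly (K : Type*) [Field K] (n : ℕ) : MvPolynomial ℕ K :=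
  X (n + 2 ^ n - 1) * X (n + 2 ^ (n + 1) - 1)

noncomputable def APoly (K : Type*) [Field K] (i : ℕ) : MvPolynomial ℕ K :=
  uPoly K (2 * i - 2) + uPoly K (2 * i - 1)


namespace CohnAux

open Finsupp

def lo (n k : ℕ) : ℕ := n + 2 ^ n - 1 + k
def hi (n k : ℕ) : ℕ := n + 2 ^ (n + 1) - 1 + k

lemma two_pow_pos (n : ℕ) : 0 < 2 ^ n := Nat.pow_pos (by norm_num)

lemma pow_succ_eq (n : ℕ) : 2 ^ (n + 1) = 2 ^ n + 2 ^ n := by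
  rw [pow_succ]; omega

lemma hi_eq (n k : ℕ) : hi n k = lo n k + 2 ^ n := by
  have h1 := two_pow_pos n
  have h2 := pow_succ_eq n
  unfold lo hi; omega

lemma lo_lt_hi (n k : ℕ) : lo n k < hi n k := by
  have := two_pow_pos n; rw [hi_eq]; omega

noncomputable def mexp (n k : ℕ) : ℕ →₀ ℕ := Finsupp.single (lo n k) 1 + Finsupp.single (hi n k) 1

lemma pair_support {a b : ℕ} (h : a ≠ b) :
    (Finsupp.single a 1 + Finsupp.single b 1 : ℕ →₀ ℕ).support = {a, b} := by
  rw [Finsupp.support_add_eq]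
  · rw [Finsupp.support_single_ne_zero _ one_ne_zero,
      Finsupp.support_single_ne_zero _ one_ne_zero]
    ext x; simp
  · rw [Finsupp.support_single_ne_zero _ one_ne_zero,
      Finsupp.support_single_ne_zero _ one_ne_zero]
    simpa using h

lemma pair_apply_left {a b : ℕ} (h : a ≠ b) :
    (Finsupp.single a 1 + Finsupp.single b 1 : ℕ →₀ ℕ) a = 1 := by
  simp [Finsupp.single_apply, h.symm]

lemma pairEq {a b c d : ℕ} (hab : a < b) (hcd : c < d)
    (h : (Finsupp.single a 1 + Finsupp.single b 1 : ℕ →₀ ℕ)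
       = Finsupp.single c 1 + Finsupp.single d 1) : a = c ∧ b = d := by
  have hs : ({a, b} : Finset ℕ) = {c, d} := by
    rw [← pair_support hab.ne, ← pair_support hcd.ne, h]
  have h1 : a = c ∨ a = d := by
    have : a ∈ ({c, d} : Finset ℕ) := by rw [← hs]; simp
    simpa using this
  have h2 : b = c ∨ b = d := by
    have : b ∈ ({c, d} : Finset ℕ) := by rw [← hs]; simp
    simpa using this
  have h3 : c = a ∨ c = b := by
    have : c ∈ ({a, b} : Finset ℕ) := by rw [hs]; simp
    simpa using this
  have h4 : d = a ∨ d = b := by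
    have : d ∈ ({a, b} : Finset ℕ) := by rw [hs]; simp
    simpa using this
  omega

lemma mexp_inj {n k n' k' : ℕ} (h : mexp n k = mexp n' k') : n = n' ∧ k = k' := by
  obtain ⟨h1, h2⟩ := pairEq (lo_lt_hi n k) (lo_lt_hi n' k') h
  have e1 := hi_eq n k
  have e2 := hi_eq n' k'
  have hn : n = n' := by
    have : (2:ℕ) ^ n = 2 ^ n' := by omega
    exact Nat.pow_right_injective (le_refl 2) this
  subst hn
  constructor
  · rfl
  · unfold lo at h1; omega

lemma sq_ne_mexp (u n k : ℕ) : Finsupp.single u 2 ≠ mexp n k := by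
  intro h
  have hlh := lo_lt_hi n k
  have := DFunLike.congr_fun h (lo n k)
  simp only [mexp, Finsupp.add_apply, Finsupp.single_apply] at this
  split_ifs at this <;> omega

lemma degOne {μ : ℕ →₀ ℕ} (h : μ.degree = 1) : ∃ u, μ = Finsupp.single u 1 := by
  have hne : μ ≠ 0 := by
    intro h0; rw [h0] at h; simp at h
  obtain ⟨u, hu⟩ := Finsupp.support_nonempty_iff.mpr hne
  have h1 : ∀ v ∈ μ.support, 1 ≤ μ v := fun v hv =>
    Nat.one_le_iff_ne_zero.mpr (Finsupp.mem_support_iff.mp hv)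
  have hcard : μ.support.card ≤ μ.degree := by
    rw [Finsupp.degree]
    calc μ.support.card = ∑ _v ∈ μ.support, 1 := by simp
    _ ≤ ∑ v ∈ μ.support, μ v := Finset.sum_le_sum h1
  have hc1 : μ.support.card = 1 := by
    have : 1 ≤ μ.support.card := Finset.card_pos.mpr ⟨u, hu⟩
    omega
  obtain ⟨w, hw⟩ := Finset.card_eq_one.mp hc1
  obtain ⟨-, hw2⟩ := Finsupp.support_eq_singleton.mp hw
  have : μ w = 1 := by
    have : μ.degree = μ w := by rw [Finsupp.degree_apply, hw, Finset.sum_singleton]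
    omega
  exact ⟨w, by rw [hw2, this]⟩

lemma degree_mexp (n k : ℕ) : (mexp n k).degree = 2 := by
  have h := lo_lt_hi n k
  rw [Finsupp.degree_apply, mexp, pair_support h.ne, Finset.sum_pair h.ne]
  simp [Finsupp.single_apply, h.ne, h.ne']


variable {K : Type*} [Field K] (σK : K →+* K)

noncomputable def B (K : Type*) [Field K] (i k : ℕ) : MvPolynomial ℕ K :=
  monomial (mexp (2 * i - 2) k) 1 + monomial (mexp (2 * i - 1) k) 1

noncomputable def Tspan (K : Type*) [Field K] (m : ℕ) : Submodule K (MvPolynomial ℕ K) :=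
  Submodule.span K {f | ∃ i k, 1 ≤ i ∧ i ≤ m ∧ f = B K i k}

/-! ### shift lemmas -/

lemma shift_C (c : K) : shift σK (C c) = C (σK c) := by
  simp [shift]

lemma shift_monomial (μ : ℕ →₀ ℕ) (c : K) :
    shift σK (monomial μ c) = monomial (Finsupp.mapDomain (· + 1) μ) (σK c) := by
  rw [show shift σK (monomial μ c) = eval₂ (C.comp σK) (fun n => X (n + 1)) (monomial μ c) from rfl,
    eval₂_monomial, monomial_eq]
  rw [Finsupp.prod_mapDomain_index_inj (fun a b => by omega)]
  rfl

lemma degree_mapDomain (f : ℕ → ℕ) (μ : ℕ →₀ ℕ) :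
    (Finsupp.mapDomain f μ).degree = μ.degree := by
  show (Finsupp.mapDomain f μ).sum (fun _ e => e) = μ.sum fun _ e => e
  apply Finsupp.sum_mapDomain_index <;> simp

lemma hc_monomial (d : ℕ) (μ : ℕ →₀ ℕ) (c : K) :
    homogeneousComponent d (monomial μ c) =
      if d = μ.degree then monomial μ c else 0 := by
  apply homogeneousComponent_of_mem
  rw [mem_homogeneousSubmodule]
  exact isHomogeneous_monomial _ rfl

lemma hc_shift (d : ℕ) (f : MvPolynomial ℕ K) :
    homogeneousComponent d (shift σK f) = shift σK (homogeneousComponent d f) := by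
  induction f using MvPolynomial.induction_on' with
  | monomial μ c =>
    rw [shift_monomial, hc_monomial, hc_monomial, degree_mapDomain]
    split_ifs
    · rw [shift_monomial]
    · rw [map_zero]
  | add p q hp hq => simp only [map_add, hp, hq]

/-! ### hc product rule -/

lemma sum_hc_of_lt (p : MvPolynomial ℕ K) {N : ℕ} (h : p.totalDegree < N) :
    ∑ i ∈ Finset.range N, homogeneousComponent i p = p := by
  conv_rhs => rw [← sum_homogeneousComponent p]
  refine (Finset.sum_subset (Finset.range_subset_range.mpr h) fun j hmem hnmem => ?_).symm
  exact homogeneousComponent_eq_zero (φ := p) (n := j)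
    (by simp only [Finset.mem_range] at hmem hnmem; omega)

lemma hc_mul (f g : MvPolynomial ℕ K) (n : ℕ) :
    homogeneousComponent n (f * g) =
      ∑ i ∈ Finset.range (n + 1),
        homogeneousComponent i f * homogeneousComponent (n - i) g := by
  classical
  set N := f.totalDegree + g.totalDegree + n + 1 with hN
  have hNn : n < N := by omega
  have hfN : f.totalDegree < N := by omega
  have hgN : g.totalDegree < N := by omega
  conv_lhs => rw [← sum_hc_of_lt f hfN, ← sum_hc_of_lt g hgN]
  rw [Finset.sum_mul_sum, map_sum]
  have step : ∀ i ∈ Finset.range N,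
      (homogeneousComponent n (∑ j ∈ Finset.range N,
        homogeneousComponent i f * homogeneousComponent j g))
      = if i ≤ n then homogeneousComponent i f * homogeneousComponent (n - i) g else 0 := by
    intro i _
    rw [map_sum]
    have hterm : ∀ j, homogeneousComponent n
        (homogeneousComponent i f * homogeneousComponent j g)
        = if n = i + j then homogeneousComponent i f * homogeneousComponent j g else 0 := by
      intro j
      apply homogeneousComponent_of_mem
      rw [mem_homogeneousSubmodule]
      exact (homogeneousComponent_isHomogeneous i f).mul (homogeneousComponent_isHomogeneous j g)
    simp_rw [hterm]
    by_cases hin : i ≤ n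
    · rw [if_pos hin, Finset.sum_eq_single_of_mem (n - i) (Finset.mem_range.mpr (by omega))]
      · rw [if_pos (by omega)]
      · intro j _ hne; rw [if_neg (by omega)]
    · rw [if_neg hin]
      apply Finset.sum_eq_zero
      intro j _; rw [if_neg (by omega)]
  rw [Finset.sum_congr rfl step, ← Finset.sum_filter]
  congr 1
  ext i
  simp only [Finset.mem_filter, Finset.mem_range]
  omega

lemma hc0_mul (f g : MvPolynomial ℕ K) :
    homogeneousComponent 0 (f * g) = homogeneousComponent 0 f * homogeneousComponent 0 g := by
  rw [hc_mul]; simp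

lemma hc1_mul (f g : MvPolynomial ℕ K) :
    homogeneousComponent 1 (f * g) =
      homogeneousComponent 0 f * homogeneousComponent 1 g +
      homogeneousComponent 1 f * homogeneousComponent 0 g := by
  rw [hc_mul, Finset.sum_range_succ, Finset.sum_range_one]

lemma hc2_mul (f g : MvPolynomial ℕ K) :
    homogeneousComponent 2 (f * g) =
      homogeneousComponent 0 f * homogeneousComponent 2 g +
      homogeneousComponent 1 f * homogeneousComponent 1 g +
      homogeneousComponent 2 f * homogeneousComponent 0 g := by
  rw [hc_mul, Finset.sum_range_succ, Finset.sum_range_succ, Finset.sum_range_one]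

/-! ### B lemmas -/

lemma B_isHomogeneous (i k : ℕ) : (B K i k).IsHomogeneous 2 :=
  ((isHomogeneous_monomial _ (degree_mexp _ k)).add (isHomogeneous_monomial _ (degree_mexp _ k)))

lemma hc_B (d i k : ℕ) :
    homogeneousComponent d (B K i k) = if d = 2 then B K i k else 0 := by
  apply homogeneousComponent_of_mem
  rw [mem_homogeneousSubmodule]
  exact B_isHomogeneous i k

lemma hc2_of_homog {f : MvPolynomial ℕ K} (hf : f.IsHomogeneous 2) :
    homogeneousComponent 2 f = f := by
  rw [homogeneousComponent_of_mem ((mem_homogeneousSubmodule _ _).mpr hf), if_pos rfl]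

lemma lo_succ (n k : ℕ) : lo n k + 1 = lo n (k + 1) := by unfold lo; omega

lemma hi_succ (n k : ℕ) : hi n k + 1 = hi n (k + 1) := by unfold hi; omega

lemma mapDomain_mexp (n k : ℕ) :
    Finsupp.mapDomain (· + 1) (mexp n k) = mexp n (k + 1) := by
  rw [mexp, Finsupp.mapDomain_add, Finsupp.mapDomain_single, Finsupp.mapDomain_single,
    lo_succ, hi_succ, mexp]

lemma shift_B (i k : ℕ) : shift σK (B K i k) = B K i (k + 1) := by
  rw [B, map_add, shift_monomial, shift_monomial, map_one, mapDomain_mexp, mapDomain_mexp, B]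

lemma uPoly_eq (n : ℕ) : uPoly K n = monomial (mexp n 0) 1 := by
  rw [uPoly, show (X (n + 2 ^ n - 1) : MvPolynomial ℕ K) = monomial (Finsupp.single (n + 2 ^ n - 1) 1) 1 from rfl,
    show (X (n + 2 ^ (n+1) - 1) : MvPolynomial ℕ K) = monomial (Finsupp.single (n + 2 ^ (n+1) - 1) 1) 1 from rfl,
    monomial_mul, mul_one, mexp, lo, hi, add_zero, add_zero]

lemma APoly_eq_B (i : ℕ) : APoly K i = B K i 0 := by
  rw [APoly, uPoly_eq, uPoly_eq, B]

lemma shift_iter_APoly (i k : ℕ) : (⇑(shift σK))^[k] (APoly K i) = B K i k := by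
  induction k with
  | zero => simpa using APoly_eq_B (K := K) i
  | succ k ih => rw [Function.iterate_succ_apply', ih, shift_B]

/-! ### Tspan lemmas -/

lemma B_mem_Tspan {m : ℕ} {i : ℕ} (h1 : 1 ≤ i) (h2 : i ≤ m) (k : ℕ) :
    B K i k ∈ Tspan K m :=
  Submodule.subset_span ⟨i, k, h1, h2, rfl⟩

lemma Tspan_shift {m : ℕ} {f : MvPolynomial ℕ K} (hf : f ∈ Tspan K m) :
    shift σK f ∈ Tspan K m := by
  induction hf using Submodule.span_induction with
  | mem x hx =>
    obtain ⟨i, k, h1, h2, rfl⟩ := hx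
    rw [shift_B]
    exact B_mem_Tspan h1 h2 _
  | zero => rw [map_zero]; exact Submodule.zero_mem _
  | add x y hx hy ihx ihy => rw [map_add]; exact Submodule.add_mem _ ihx ihy
  | smul a x hx ih =>
    rw [smul_eq_C_mul, map_mul, shift_C, ← smul_eq_C_mul]
    exact Submodule.smul_mem _ _ ih

lemma Tspan_P1 {m : ℕ} {f : MvPolynomial ℕ K} (hf : f ∈ Tspan K m) :
    ∀ μ, coeff μ f ≠ 0 → ∃ n k, n < 2 * m ∧ μ = mexp n k := by
  induction hf using Submodule.span_induction with
  | mem x hx =>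
    obtain ⟨i, k, h1, h2, rfl⟩ := hx
    intro μ hμ
    rw [B, coeff_add, coeff_monomial, coeff_monomial] at hμ
    split_ifs at hμ with e1 e2 e2
    · exact ⟨2 * i - 2, k, by omega, e1.symm⟩
    · exact ⟨2 * i - 2, k, by omega, e1.symm⟩
    · exact ⟨2 * i - 1, k, by omega, e2.symm⟩
    · simp at hμ
  | zero => intro μ hμ; simp at hμ
  | add x y hx hy ihx ihy =>
    intro μ hμ
    rw [coeff_add] at hμ
    rcases (by by_contra hc; push_neg at hc; rw [hc.1, hc.2] at hμ; simp at hμ :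
      coeff μ x ≠ 0 ∨ coeff μ y ≠ 0) with h | h
    · exact ihx μ h
    · exact ihy μ h
  | smul a x hx ih =>
    intro μ hμ
    rw [coeff_smul] at hμ
    exact ih μ (by intro h; rw [h] at hμ; simp at hμ)

lemma Tspan_P2 {m : ℕ} {f : MvPolynomial ℕ K} (hf : f ∈ Tspan K m) :
    ∀ i k, 1 ≤ i → coeff (mexp (2 * i - 2) k) f = coeff (mexp (2 * i - 1) k) f := by
  induction hf using Submodule.span_induction with
  | mem x hx =>
    obtain ⟨i', k', h1, h2, rfl⟩ := hx
    intro i k hi1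
    have hc2' : ¬ (mexp (2*i'-1) k' = mexp (2*i-2) k) := fun h => by
      obtain ⟨h3, -⟩ := mexp_inj h; omega
    have hc3' : ¬ (mexp (2*i'-2) k' = mexp (2*i-1) k) := fun h => by
      obtain ⟨h3, -⟩ := mexp_inj h; omega
    rw [B, coeff_add, coeff_add, coeff_monomial, coeff_monomial, coeff_monomial, coeff_monomial,
      if_neg hc2', if_neg hc3']
    by_cases h : mexp (2*i'-2) k' = mexp (2*i-2) k
    · rw [if_pos h, if_pos (show mexp (2*i'-1) k' = mexp (2*i-1) k by
        obtain ⟨h3, h4⟩ := mexp_inj h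
        have e : 2*i'-1 = 2*i-1 := by omega
        rw [e, h4])]
      ring
    · rw [if_neg h, if_neg (show ¬ (mexp (2*i'-1) k' = mexp (2*i-1) k) from fun h' => h (by
        obtain ⟨h3, h4⟩ := mexp_inj h'
        have e : 2*i'-2 = 2*i-2 := by omega
        rw [e, h4]))]
  | zero => intro i k hi1; simp
  | add x y hx hy ihx ihy => intro i k hi1; rw [coeff_add, coeff_add, ihx i k hi1, ihy i k hi1]
  | smul a x hx ih => intro i k hi1; rw [coeff_smul, coeff_smul, ih i k hi1]


lemma Tspan_gen_eq (K : Type*) [Field K] (m : ℕ) :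
    Tspan K m = Submodule.span K {f | ∃ i k, 1 ≤ i ∧ i ≤ m ∧ f = B K i k} := rfl

section KeyLemma

variable {K : Type*} [Field K]

lemma homog1_factor {L : MvPolynomial ℕ K} (hL : L.IsHomogeneous 1)
    {c : ℕ →₀ ℕ} (h : coeff c L ≠ 0) : ∃ w, c = Finsupp.single w 1 :=
  degOne (by rw [Finsupp.degree_eq_weight_one]; exact hL h)

lemma or_ne {a b : K} (h : a + b ≠ 0) : a ≠ 0 ∨ b ≠ 0 := by
  by_contra hc
  push_neg at hc
  rw [hc.1, hc.2] at h
  simp at h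

lemma coeff_mul_edge (L M : MvPolynomial ℕ K) (hL : L.IsHomogeneous 1) (hM : M.IsHomogeneous 1)
    (u v : ℕ) (huv : u ≠ v) :
    coeff (Finsupp.single u 1 + Finsupp.single v 1) (L * M)
      = coeff (Finsupp.single u 1) L * coeff (Finsupp.single v 1) M
        + coeff (Finsupp.single v 1) L * coeff (Finsupp.single u 1) M := by
  classical
  rw [coeff_mul]
  have hmem1 : ((Finsupp.single u 1, Finsupp.single v 1) : (ℕ →₀ ℕ) × (ℕ →₀ ℕ))
      ∈ Finset.HasAntidiagonal.antidiagonal (Finsupp.single u 1 + Finsupp.single v 1) := by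
    rw [Finset.HasAntidiagonal.mem_antidiagonal]
  have hmem2 : ((Finsupp.single v 1, Finsupp.single u 1) : (ℕ →₀ ℕ) × (ℕ →₀ ℕ))
      ∈ Finset.HasAntidiagonal.antidiagonal (Finsupp.single u 1 + Finsupp.single v 1) := by
    rw [Finset.HasAntidiagonal.mem_antidiagonal, add_comm]
  have hne : ((Finsupp.single u 1, Finsupp.single v 1) : (ℕ →₀ ℕ) × (ℕ →₀ ℕ))
      ≠ (Finsupp.single v 1, Finsupp.single u 1) := by
    intro h
    exact huv ((Finsupp.single_left_inj one_ne_zero).mp (congrArg Prod.fst h))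
  rw [Finset.sum_eq_add_of_mem _ _ hmem1 hmem2 hne]
  intro c hc hcne
  rcases c with ⟨c1, c2⟩
  by_contra hz
  have h1 : coeff c1 L ≠ 0 := left_ne_zero_of_mul hz
  have h2 : coeff c2 M ≠ 0 := right_ne_zero_of_mul hz
  obtain ⟨w, rfl⟩ := homog1_factor hL h1
  obtain ⟨w', rfl⟩ := homog1_factor hM h2
  rw [Finset.HasAntidiagonal.mem_antidiagonal] at hc
  by_cases hww : w = w'
  · subst hww
    have happ := DFunLike.congr_fun hc u
    have huvv := pair_apply_left huv
    rw [huvv] at happ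
    simp only [Finsupp.add_apply, Finsupp.single_apply] at happ
    split_ifs at happ <;> omega
  · have hsupp : ({w, w'} : Finset ℕ) = {u, v} := by
      rw [← pair_support hww, ← pair_support huv, hc]
    have hw : w = u ∨ w = v := by
      have : w ∈ ({u, v} : Finset ℕ) := by rw [← hsupp]; simp
      simpa using this
    rcases hw with rfl | rfl
    · have : Finsupp.single w' (1:ℕ) = Finsupp.single v 1 := by
        have := hc
        rwa [add_right_inj] at this
      have : w' = v := (Finsupp.single_left_inj one_ne_zero).mp this
      subst this
      exact hcne.1 rfl
    · have : Finsupp.single w' (1:ℕ) = Finsupp.single u 1 := by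
        rw [add_comm (Finsupp.single u 1)] at hc
        rwa [add_right_inj] at hc
      have : w' = u := (Finsupp.single_left_inj one_ne_zero).mp this
      subst this
      exact hcne.2 rfl

lemma coeff_mul_sq (L M : MvPolynomial ℕ K) (hL : L.IsHomogeneous 1) (hM : M.IsHomogeneous 1)
    (u : ℕ) :
    coeff (Finsupp.single u 2) (L * M)
      = coeff (Finsupp.single u 1) L * coeff (Finsupp.single u 1) M := by
  classical
  rw [coeff_mul]
  have hmem : ((Finsupp.single u 1, Finsupp.single u 1) : (ℕ →₀ ℕ) × (ℕ →₀ ℕ))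
      ∈ Finset.HasAntidiagonal.antidiagonal (Finsupp.single u 2) := by
    rw [Finset.HasAntidiagonal.mem_antidiagonal, ← Finsupp.single_add]
  rw [Finset.sum_eq_single_of_mem _ hmem]
  intro c hc hcne
  rcases c with ⟨c1, c2⟩
  by_contra hz
  have h1 : coeff c1 L ≠ 0 := left_ne_zero_of_mul hz
  have h2 : coeff c2 M ≠ 0 := right_ne_zero_of_mul hz
  obtain ⟨w, rfl⟩ := homog1_factor hL h1
  obtain ⟨w', rfl⟩ := homog1_factor hM h2
  rw [Finset.HasAntidiagonal.mem_antidiagonal] at hc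
  have happ := DFunLike.congr_fun hc w
  simp only [Finsupp.add_apply, Finsupp.single_apply] at happ
  by_cases hww : w = w'
  · subst hww
    have hwu : u = w := by split_ifs at happ <;> omega
    subst hwu
    exact hcne rfl
  · split_ifs at happ <;> omega

lemma exists_max (L : MvPolynomial ℕ K) (hL : L.IsHomogeneous 1) (hL0 : L ≠ 0) :
    ∃ u0, coeff (Finsupp.single u0 1) L ≠ 0 ∧
      ∀ u, coeff (Finsupp.single u 1) L ≠ 0 → u ≤ u0 := by
  classical
  set F : (ℕ →₀ ℕ) → ℕ := fun μ => μ.support.sup id with hF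
  obtain ⟨μ, hμmem, hμ⟩ := Finset.exists_mem_eq_sup L.support
    (MvPolynomial.support_nonempty.mpr hL0) F
  have hcoeff : coeff μ L ≠ 0 := MvPolynomial.mem_support_iff.mp hμmem
  obtain ⟨w, rfl⟩ := homog1_factor hL hcoeff
  have hFw : F (Finsupp.single w 1) = w := by
    rw [hF]
    simp only []
    rw [Finsupp.support_single_ne_zero _ one_ne_zero, Finset.sup_singleton, id]
  refine ⟨L.support.sup F, ?_, ?_⟩
  · rw [hμ, hFw]
    exact hcoeff
  · intro u hu
    have : Finsupp.single u 1 ∈ L.support := MvPolynomial.mem_support_iff.mpr hu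
    have hle := Finset.le_sup (f := F) this
    have hFu : F (Finsupp.single u 1) = u := by
      rw [hF]
      simp only []
      rw [Finsupp.support_single_ne_zero _ one_ne_zero, Finset.sup_singleton, id]
    rwa [hFu] at hle

lemma core (m : ℕ) (L M : MvPolynomial ℕ K)
    (hL : L.IsHomogeneous 1) (hM : M.IsHomogeneous 1)
    (hP1 : ∀ μ, coeff μ (L * M) ≠ 0 → ∃ n k, n < 2 * m ∧ μ = mexp n k)
    (hP2 : ∀ i k, 1 ≤ i →
      coeff (mexp (2 * i - 2) k) (L * M) = coeff (mexp (2 * i - 1) k) (L * M))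
    (u0 v0 : ℕ)
    (hu0 : coeff (Finsupp.single u0 1) L ≠ 0)
    (hu0max : ∀ u, coeff (Finsupp.single u 1) L ≠ 0 → u ≤ u0)
    (hv0 : coeff (Finsupp.single v0 1) M ≠ 0)
    (hv0max : ∀ v, coeff (Finsupp.single v 1) M ≠ 0 → v ≤ v0)
    (hlt : u0 < v0) : False := by
  have msq : ∀ u, coeff (Finsupp.single u 1) L * coeff (Finsupp.single u 1) M = 0 := by
    intro u
    by_contra hz
    have hcoeff : coeff (Finsupp.single u 2) (L * M) ≠ 0 := by
      rw [coeff_mul_sq L M hL hM u]; exact hz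
    obtain ⟨n, k, -, hμ⟩ := hP1 _ hcoeff
    exact sq_ne_mexp u n k hμ
  have mz : ∀ u, coeff (Finsupp.single u 1) M ≠ 0 → coeff (Finsupp.single u 1) L = 0 := by
    intro u h
    rcases mul_eq_zero.mp (msq u) with h' | h'
    · exact h'
    · exact absurd h' h
  have eNZ : ∀ u v, u ≠ v → coeff (Finsupp.single u 1) L ≠ 0 →
      coeff (Finsupp.single v 1) M ≠ 0 →
      coeff (Finsupp.single u 1 + Finsupp.single v 1) (L * M) ≠ 0 := by
    intro u v huv hu hv
    rw [coeff_mul_edge L M hL hM u v huv, mz v hv, zero_mul, add_zero]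
    exact mul_ne_zero hu hv
  have shape : ∀ u v : ℕ, u < v →
      coeff (Finsupp.single u 1 + Finsupp.single v 1) (L * M) ≠ 0 →
      ∃ n k, n < 2 * m ∧ u = lo n k ∧ v = hi n k := by
    intro u v huv h
    obtain ⟨n, k, hn, hμ⟩ := hP1 _ h
    obtain ⟨h1, h2⟩ := pairEq huv (lo_lt_hi n k) hμ
    exact ⟨n, k, hn, h1, h2⟩
  have bound : ∀ n k, coeff (mexp n k) (L * M) ≠ 0 → hi n k ≤ v0 := by
    intro n k h
    rw [mexp, coeff_mul_edge L M hL hM _ _ (lo_lt_hi n k).ne] at h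
    rcases or_ne h with h' | h'
    · exact hv0max _ (right_ne_zero_of_mul h')
    · exact le_trans (hu0max _ (left_ne_zero_of_mul h')) hlt.le
  have e0 : coeff (Finsupp.single u0 1 + Finsupp.single v0 1) (L * M) ≠ 0 :=
    eNZ u0 v0 hlt.ne hu0 hv0
  obtain ⟨n0, k0, hn0, hu0e, hv0e⟩ := shape u0 v0 hlt e0
  have e0m : coeff (mexp n0 k0) (L * M) ≠ 0 := by
    rw [mexp, ← hu0e, ← hv0e]; exact e0
  have hv0u : v0 = u0 + 2 ^ n0 := by rw [hu0e, hv0e, hi_eq]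
  rcases Nat.even_or_odd n0 with ⟨j, hj⟩ | ⟨j, hj⟩
  · -- even case : n0 = j + j, partner sticks out above v0
    have hp2 := hP2 (j + 1) k0 (by omega)
    rw [show 2 * (j + 1) - 2 = n0 by omega, show 2 * (j + 1) - 1 = n0 + 1 by omega] at hp2
    have e1 : coeff (mexp (n0 + 1) k0) (L * M) ≠ 0 := by rw [← hp2]; exact e0m
    have hb := bound _ _ e1
    have a2 := hi_eq (n0 + 1) k0
    have a3 := lo_lt_hi (n0 + 1) k0
    have a4 : lo (n0 + 1) k0 = v0 + 1 := by
      have b1 : lo (n0 + 1) k0 = (n0 + 1) + 2 ^ (n0 + 1) - 1 + k0 := rfl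
      have b2 : hi n0 k0 = n0 + 2 ^ (n0 + 1) - 1 + k0 := rfl
      have := two_pow_pos (n0 + 1)
      rw [hv0e]
      omega
    omega
  · -- odd case : n0 = 2j+1
    have hp2 := hP2 (j + 1) k0 (by omega)
    rw [show 2 * (j + 1) - 2 = 2 * j by omega, show 2 * (j + 1) - 1 = n0 by omega] at hp2
    have e1 : coeff (mexp (2 * j) k0) (L * M) ≠ 0 := by rw [hp2]; exact e0m
    obtain ⟨x, hx⟩ : ∃ x, lo (2 * j) k0 = x := ⟨_, rfl⟩
    obtain ⟨y, hy⟩ : ∃ y, hi (2 * j) k0 = y := ⟨_, rfl⟩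
    have hxy : x < y := by rw [← hx, ← hy]; exact lo_lt_hi (2 * j) k0
    have hyx : y = x + 2 ^ (2 * j) := by rw [← hx, ← hy]; exact hi_eq (2 * j) k0
    have hyu : y + 1 = u0 := by
      have b1 : lo n0 k0 = n0 + 2 ^ n0 - 1 + k0 := rfl
      have b2 : hi (2 * j) k0 = 2 * j + 2 ^ (2 * j + 1) - 1 + k0 := rfl
      have b3 : (2:ℕ) ^ n0 = 2 ^ (2 * j + 1) := by rw [hj]
      have := two_pow_pos (2 * j + 1)
      omega
    rw [mexp, hx, hy] at e1
    rw [coeff_mul_edge L M hL hM x y hxy.ne] at e1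
    rcases or_ne e1 with hA | hB
    · -- x on the L side
      have hlx : coeff (Finsupp.single x 1) L ≠ 0 := left_ne_zero_of_mul hA
      have hmy : coeff (Finsupp.single y 1) M ≠ 0 := right_ne_zero_of_mul hA
      by_cases hj0 : j = 0
      · -- n0 = 1 : special case
        subst hj0
        have hyu0 : y < u0 := by omega
        have e2 : coeff (Finsupp.single y 1 + Finsupp.single u0 1) (L * M) ≠ 0 := by
          have h' := eNZ u0 y (by omega) hu0 hmy
          rwa [add_comm] at h'
        obtain ⟨n', k', hn', hy', hu'⟩ := shape y u0 hyu0 e2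
        have hd : u0 = y + 2 ^ n' := by rw [hu', hy', hi_eq]
        have hn'0 : n' = 0 := by
          have h21 : (2:ℕ) ^ n' = 1 := by omega
          by_contra hne0
          have : 2 ≤ 2 ^ n' := by
            calc (2:ℕ) = 2 ^ 1 := rfl
            _ ≤ 2 ^ n' := Nat.pow_le_pow_right (by norm_num) (by omega)
          omega
        subst hn'0
        have hp2' := hP2 1 y (le_refl 1)
        rw [show 2 * 1 - 2 = 0 by omega, show 2 * 1 - 1 = 1 by omega] at hp2'
        have hm0 : mexp 0 y = Finsupp.single y 1 + Finsupp.single u0 1 := by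
          rw [mexp, show lo 0 y = y from by norm_num [lo],
            show hi 0 y = u0 from by norm_num [hi]; omega]
        have e3 : coeff (mexp 1 y) (L * M) ≠ 0 := by
          rw [← hp2', hm0]; exact e2
        have hb := bound _ _ e3
        have e4 : (2:ℕ) ^ (1 + 1) = 4 := by norm_num
        have hb4 : hi 1 y = y + 4 := by unfold hi; omega
        have h5 : (2:ℕ) ^ n0 = 2 := by rw [hj]; norm_num
        omega
      · -- j ≥ 1
        have hxv : x < v0 := by omega
        have e2 : coeff (Finsupp.single x 1 + Finsupp.single v0 1) (L * M) ≠ 0 :=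
          eNZ x v0 (by omega) hlx hv0
        obtain ⟨n', k', hn', hx', hv'⟩ := shape x v0 hxv e2
        have hd : v0 = x + 2 ^ n' := by rw [hv', hx', hi_eq]
        have hxx : 2 ^ n' = 2 ^ (2 * j) + 2 ^ (2 * j + 1) + 1 := by
          have b3 : (2:ℕ) ^ n0 = 2 ^ (2 * j + 1) := by rw [hj]
          omega
        rcases Nat.eq_zero_or_pos n' with hcase | hcase
        · rw [hcase] at hxx
          have := two_pow_pos (2 * j)
          have := two_pow_pos (2 * j + 1)
          have h1 : (2:ℕ) ^ 0 = 1 := rfl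
          omega
        · obtain ⟨s, rfl⟩ : ∃ s, n' = s + 1 := ⟨n' - 1, by omega⟩
          have q1 := pow_succ_eq s
          have q2 := pow_succ_eq (2 * j)
          have q3 : 2 * j = (2 * j - 1) + 1 := by omega
          have q5 : (2:ℕ) ^ (2 * j) = 2 ^ (2 * j - 1) + 2 ^ (2 * j - 1) := by
            rw [q3]; exact pow_succ_eq _
          omega
    · -- y on the L side
      have hly : coeff (Finsupp.single y 1) L ≠ 0 := left_ne_zero_of_mul hB
      have hyv : y < v0 := by omega
      have e2 : coeff (Finsupp.single y 1 + Finsupp.single v0 1) (L * M) ≠ 0 :=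
        eNZ y v0 (by omega) hly hv0
      obtain ⟨n', k', hn', hy', hv'⟩ := shape y v0 hyv e2
      have hd : v0 = y + 2 ^ n' := by rw [hv', hy', hi_eq]
      have hxx : 2 ^ n' = 2 ^ (2 * j + 1) + 1 := by
        have b3 : (2:ℕ) ^ n0 = 2 ^ (2 * j + 1) := by rw [hj]
        omega
      rcases Nat.eq_zero_or_pos n' with hcase | hcase
      · rw [hcase] at hxx
        have := two_pow_pos (2 * j + 1)
        have h1 : (2:ℕ) ^ 0 = 1 := rfl
        omega
      · obtain ⟨s, rfl⟩ : ∃ s, n' = s + 1 := ⟨n' - 1, by omega⟩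
        have q1 := pow_succ_eq s
        have q2 := pow_succ_eq (2 * j)
        omega

lemma key (m : ℕ) (L M : MvPolynomial ℕ K)
    (hL : L.IsHomogeneous 1) (hM : M.IsHomogeneous 1) (hT : L * M ∈ Tspan K m) :
    L * M = 0 := by
  by_contra hz
  have hL0 : L ≠ 0 := left_ne_zero_of_mul hz
  have hM0 : M ≠ 0 := right_ne_zero_of_mul hz
  obtain ⟨u0, hu0, hu0max⟩ := exists_max L hL hL0
  obtain ⟨v0, hv0, hv0max⟩ := exists_max M hM hM0
  have hP1 := Tspan_P1 hT
  have hP2 := Tspan_P2 hT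
  have hne : u0 ≠ v0 := by
    intro h
    subst h
    have hcoeff : coeff (Finsupp.single u0 2) (L * M) ≠ 0 := by
      rw [coeff_mul_sq L M hL hM u0]
      exact mul_ne_zero hu0 hv0
    obtain ⟨n, k, -, hμ⟩ := hP1 _ hcoeff
    exact sq_ne_mexp u0 n k hμ
  rcases lt_or_gt_of_ne hne with h | h
  · exact core m L M hL hM hP1 hP2 u0 v0 hu0 hu0max hv0 hv0max h
  · apply core m M L hM hL ?_ ?_ v0 u0 hv0 hv0max hu0 hu0max h
    · intro μ hμ
      rw [mul_comm] at hμ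
      exact hP1 μ hμ
    · intro i k h1
      rw [mul_comm M L]
      exact hP2 i k h1

end KeyLemma

section GoodPart

variable {K : Type*} [Field K]

def GOOD (K : Type*) [Field K] (m : ℕ) (f : MvPolynomial ℕ K) : Prop :=
  homogeneousComponent 0 f = 0 ∧ homogeneousComponent 1 f = 0 ∧
    homogeneousComponent 2 f ∈ Tspan K m

lemma GOOD_zero (m : ℕ) : GOOD K m 0 :=
  ⟨map_zero _, map_zero _, by rw [map_zero]; exact Submodule.zero_mem _⟩

lemma GOOD_add {m : ℕ} {f g : MvPolynomial ℕ K} (hf : GOOD K m f) (hg : GOOD K m g) :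
    GOOD K m (f + g) :=
  ⟨by rw [map_add, hf.1, hg.1, add_zero],
   by rw [map_add, hf.2.1, hg.2.1, add_zero],
   by rw [map_add]; exact Submodule.add_mem _ hf.2.2 hg.2.2⟩

lemma GOOD_mul {m : ℕ} (g p : MvPolynomial ℕ K) (hp : GOOD K m p) : GOOD K m (g * p) := by
  obtain ⟨h0, h1, h2⟩ := hp
  refine ⟨?_, ?_, ?_⟩
  · rw [hc0_mul, h0, mul_zero]
  · rw [hc1_mul, h1, h0, mul_zero, mul_zero, add_zero]
  · rw [hc2_mul, h1, h0, mul_zero, mul_zero, add_zero, add_zero,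
      homogeneousComponent_zero, ← smul_eq_C_mul]
    exact Submodule.smul_mem _ _ h2

lemma GOOD_ideal_span {m : ℕ} {G : Set (MvPolynomial ℕ K)} (hG : ∀ g ∈ G, GOOD K m g)
    {f : MvPolynomial ℕ K} (hf : f ∈ Ideal.span G) : GOOD K m f := by
  induction hf using Submodule.span_induction with
  | mem x hx => exact hG x hx
  | zero => exact GOOD_zero m
  | add x y _ _ ihx ihy => exact GOOD_add ihx ihy
  | smul a x _ ih => rw [smul_eq_mul]; exact GOOD_mul a x ih

lemma GOOD_shift (σK : K →+* K) {m : ℕ} {f : MvPolynomial ℕ K} (hf : GOOD K m f) :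
    GOOD K m (shift σK f) :=
  ⟨by rw [hc_shift, hf.1, map_zero], by rw [hc_shift, hf.2.1, map_zero],
   by rw [hc_shift]; exact Tspan_shift σK hf.2.2⟩

lemma GOOD_shift_iter (σK : K →+* K) {m : ℕ} (k : ℕ) (f : MvPolynomial ℕ K)
    (hf : GOOD K m f) : GOOD K m ((⇑(shift σK))^[k] f) := by
  induction k with
  | zero => exact hf
  | succ k ih => rw [Function.iterate_succ_apply']; exact GOOD_shift σK ih

lemma GOOD_B {m i : ℕ} (h1 : 1 ≤ i) (h2 : i ≤ m) (k : ℕ) : GOOD K m (B K i k) :=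
  ⟨by rw [hc_B]; norm_num, by rw [hc_B]; norm_num,
   by rw [hc_B, if_pos rfl]; exact B_mem_Tspan h1 h2 k⟩

lemma GOOD_prime (σK : K →+* K) (m : ℕ) (p q : MvPolynomial ℕ K)
    (hpq : GOOD K m (p * q)) : GOOD K m (p * shift σK q) := by
  obtain ⟨h0, h1, h2⟩ := hpq
  rw [hc0_mul, homogeneousComponent_zero, homogeneousComponent_zero] at h0
  rw [hc1_mul, homogeneousComponent_zero, homogeneousComponent_zero] at h1
  rw [hc2_mul, homogeneousComponent_zero, homogeneousComponent_zero] at h2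
  have s0 : homogeneousComponent 0 (shift σK q) = C (σK (coeff 0 q)) := by
    rw [hc_shift, homogeneousComponent_zero, shift_C]
  have s1 : homogeneousComponent 1 (shift σK q) = shift σK (homogeneousComponent 1 q) :=
    hc_shift σK 1 q
  have s2 : homogeneousComponent 2 (shift σK q) = shift σK (homogeneousComponent 2 q) :=
    hc_shift σK 2 q
  have hαβ : coeff 0 p * coeff 0 q = 0 := by
    rwa [← C_mul, C_eq_zero] at h0
  refine ⟨?_, ?_, ?_⟩
  · rw [hc0_mul, homogeneousComponent_zero, s0, ← C_mul]
    rcases mul_eq_zero.mp hαβ with h | h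
    · rw [h, zero_mul, C_0]
    · rw [h, map_zero, mul_zero, C_0]
  · rw [hc1_mul, homogeneousComponent_zero, s0, s1]
    rcases mul_eq_zero.mp hαβ with hα | hβ
    · rw [hα, C_0, zero_mul, zero_add]
      rw [hα, C_0, zero_mul, zero_add] at h1
      rcases mul_eq_zero.mp h1 with h | h
      · rw [h, zero_mul]
      · rw [C_eq_zero] at h
        rw [h, map_zero, C_0, mul_zero]
    · rw [hβ, map_zero, C_0, mul_zero, add_zero]
      rw [hβ, C_0, mul_zero, add_zero] at h1
      rcases mul_eq_zero.mp h1 with h | h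
      · rw [h, zero_mul]
      · rw [h, map_zero, mul_zero]
  · rw [hc2_mul, homogeneousComponent_zero, s0, s1, s2]
    by_cases hα : coeff 0 p = 0
    · by_cases hβ : coeff 0 q = 0
      · rw [hα, C_0, zero_mul, zero_add, hβ, map_zero, C_0, mul_zero, add_zero]
        rw [hα, C_0, zero_mul, zero_add, hβ, C_0, mul_zero, add_zero] at h2
        have hkey := key m (homogeneousComponent 1 p) (homogeneousComponent 1 q)
          (homogeneousComponent_isHomogeneous 1 p) (homogeneousComponent_isHomogeneous 1 q) h2
        rcases mul_eq_zero.mp hkey with h | h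
        · rw [h, zero_mul]; exact Submodule.zero_mem _
        · rw [h, map_zero, mul_zero]; exact Submodule.zero_mem _
      · have hp1 : homogeneousComponent 1 p = 0 := by
          rw [hα, C_0, zero_mul, zero_add] at h1
          rcases mul_eq_zero.mp h1 with h | h
          · exact h
          · exact absurd (C_eq_zero.mp h) hβ
        rw [hα, C_0, zero_mul, zero_add, hp1, zero_mul, zero_add]
        rw [hα, C_0, zero_mul, zero_add, hp1, zero_mul, zero_add] at h2
        have hp2T : homogeneousComponent 2 p ∈ Tspan K m := by
          have hsm := Submodule.smul_mem (Tspan K m) (coeff 0 q)⁻¹ h2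
          rw [smul_eq_C_mul,
            show C (coeff 0 q)⁻¹ * (homogeneousComponent 2 p * C (coeff 0 q))
              = homogeneousComponent 2 p * (C (coeff 0 q)⁻¹ * C (coeff 0 q)) from by ring,
            ← C_mul, inv_mul_cancel₀ hβ, C_1, mul_one] at hsm
          exact hsm
        rw [mul_comm, ← smul_eq_C_mul]
        exact Submodule.smul_mem _ _ hp2T
    · have hβ : coeff 0 q = 0 := by
        rcases mul_eq_zero.mp hαβ with h | h
        · exact absurd h hα
        · exact h
      have hq1 : homogeneousComponent 1 q = 0 := by
        rw [hβ, C_0, mul_zero, add_zero] at h1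
        rcases mul_eq_zero.mp h1 with h | h
        · exact absurd (C_eq_zero.mp h) hα
        · exact h
      rw [hβ, map_zero, C_0, mul_zero, add_zero, hq1, map_zero, mul_zero, add_zero]
      rw [hβ, C_0, mul_zero, add_zero, hq1, mul_zero, add_zero] at h2
      have hq2T : homogeneousComponent 2 q ∈ Tspan K m := by
        have hsm := Submodule.smul_mem (Tspan K m) (coeff 0 p)⁻¹ h2
        rw [smul_eq_C_mul, ← mul_assoc, ← C_mul, inv_mul_cancel₀ hα, C_1, one_mul] at hsm
        exact hsm
      rw [← smul_eq_C_mul]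
      exact Submodule.smul_mem _ _ (Tspan_shift σK hq2T)

lemma claim (σK : K →+* K) (m : ℕ) (S : Set (MvPolynomial ℕ K))
    (hS : S = {g | ∃ i, 1 ≤ i ∧ i ≤ m ∧ g = APoly K i}) :
    ∀ n, ∀ f ∈ sigmaSpan (shift σK) (shuffle (shift σK) S n), GOOD K m f := by
  intro n
  induction n with
  | zero =>
    intro f hf
    have hf' : f ∈ Ideal.span
        {x | ∃ a ∈ shuffle (shift σK) S 0, ∃ k : ℕ, x = (⇑(shift σK))^[k] a} := hf
    apply GOOD_ideal_span ?_ hf'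
    rintro g ⟨a, ha, k, rfl⟩
    have ha' : a ∈ S := ha
    rw [hS] at ha'
    obtain ⟨i, h1, h2, rfl⟩ := ha'
    rw [shift_iter_APoly]
    exact GOOD_B h1 h2 k
  | succ n ih =>
    intro f hf
    have hf' : f ∈ Ideal.span
        {x | ∃ a ∈ shuffle (shift σK) S (n+1), ∃ k : ℕ, x = (⇑(shift σK))^[k] a} := hf
    apply GOOD_ideal_span ?_ hf'
    rintro g ⟨a, ha, k, rfl⟩
    have ha' : a ∈ primeSet (shift σK)
        (sigmaSpan (shift σK) (shuffle (shift σK) S n) : Set (MvPolynomial ℕ K)) := ha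
    obtain ⟨p, q, hpq, rfl⟩ := ha'
    exact GOOD_shift_iter σK k _ (GOOD_prime σK m p q (ih _ hpq))

end GoodPart

end CohnAux

open CohnAux in
theorem stmt_11 {K : Type*} [Field K] (σK : K →+* K) (m : ℕ) (hm : 1 ≤ m)
    (S : Set (MvPolynomial ℕ K)) (hS : S = {g | ∃ i, 1 ≤ i ∧ i ≤ m ∧ g = APoly K i})
    (W : Set (MvPolynomial ℕ K))
    (hW : W = {f | f ∈ sigmaSpan (shift σK) S ∧ f.IsHomogeneous 2})
    (Wn : ℕ → Set (MvPolynomial ℕ K))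
    (hWn : ∀ n, Wn n = {f | f ∈ shuffle (shift σK) S n ∧ f.IsHomogeneous 2}) :
    ∀ n, 1 ≤ n → Wn n = W := by
  have hSsub : ∀ n, S ⊆ shuffle (shift σK) S n := by
    intro n
    induction n with
    | zero => exact fun x hx => hx
    | succ n ih =>
      intro x hx
      show x ∈ primeSet (shift σK)
        (sigmaSpan (shift σK) (shuffle (shift σK) S n) : Set (MvPolynomial ℕ K))
      refine ⟨x, 1, ?_, by rw [map_one, mul_one]⟩
      rw [mul_one]
      exact Ideal.subset_span ⟨x, ih hx, 0, rfl⟩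
  have hTsub : ∀ f : MvPolynomial ℕ K, f ∈ Tspan K m → f ∈ sigmaSpan (shift σK) S := by
    intro f hf
    rw [Tspan_gen_eq] at hf
    induction hf using Submodule.span_induction with
    | mem x hx =>
      obtain ⟨i, k, h1, h2, rfl⟩ := hx
      exact Ideal.subset_span
        ⟨APoly K i, by rw [hS]; exact ⟨i, h1, h2, rfl⟩, k, (shift_iter_APoly σK i k).symm⟩
    | zero => exact Ideal.zero_mem _
    | add x y _ _ ihx ihy => exact Ideal.add_mem _ ihx ihy
    | smul a x _ ih => rw [smul_eq_C_mul]; exact Ideal.mul_mem_left _ _ ih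
  intro n hn
  rw [hWn n, hW]
  ext f
  simp only [Set.mem_setOf_eq]
  constructor
  · rintro ⟨hmem, hhom⟩
    refine ⟨?_, hhom⟩
    have hG : GOOD K m f := claim σK m S hS n f (Ideal.subset_span ⟨f, hmem, 0, rfl⟩)
    have h2 := hG.2.2
    rw [hc2_of_homog hhom] at h2
    exact hTsub f h2
  · rintro ⟨hmem, hhom⟩
    refine ⟨?_, hhom⟩
    obtain ⟨n', rfl⟩ : ∃ n', n = n' + 1 := ⟨n - 1, by omega⟩
    show f ∈ primeSet (shift σK)
      (sigmaSpan (shift σK) (shuffle (shift σK) S n') : Set (MvPolynomial ℕ K))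
    refine ⟨f, 1, ?_, by rw [map_one, mul_one]⟩
    rw [mul_one]
    have hmono : sigmaSpan (shift σK) S ≤ sigmaSpan (shift σK) (shuffle (shift σK) S n') := by
      apply Ideal.span_mono
      rintro x ⟨a, ha, k, rfl⟩
      exact ⟨a, hSsub n' ha, k, rfl⟩
    exact hmono hmem
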